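/- Let n ≥ 3. For c = (c_0,…,c_{n-1}) ∈ F₂ⁿ define ς(c) = c_0 + c_1 + c_{n-1} + 1 if the (n−1)-tuple (c_1,…,c_{n-1}) is a necklace or a co-necklace, and ς(c) = c_0 + c_1 + c_{n-1} otherwise. Then ς generates a de Bruijn sequence of order n, i.e., the map c ↦ (c_1,…,c_{n-1}, ς(c)) is a cyclic permutation of F₂ⁿ. -/

import Mathlib

attribute [local instance] Classical.propDecidable

abbrev F2 := ZMod 2

/-- Coordinate access with default value `0` outside the range. -/
noncomputable def get {n : ℕ} (c : Fin n → F2) (j : ℕ) : F2 :=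
  if h : j < n then c ⟨j, h⟩ else 0

/-- Lexicographic order on binary tuples (coordinates compared from index 0, with 0 < 1). -/
def lexLe {m : ℕ} (v w : Fin m → F2) : Prop :=
  ∀ j : Fin m, (∀ i : Fin m, i < j → v i = w i) → (v j).val ≤ (w j).val

def lexLt {m : ℕ} (v w : Fin m → F2) : Prop := lexLe v w ∧ v ≠ w

/-- Left cyclic rotation by `r`. -/
def rot {m : ℕ} (r : ℕ) (w : Fin m → F2) : Fin m → F2 :=
  fun i => w ⟨((i : ℕ) + r) % m, Nat.mod_lt _ i.pos⟩

/-- `w` is lexicographically minimal among its cyclic rotations. -/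
def IsNecklace {m : ℕ} (w : Fin m → F2) : Prop := ∀ r : ℕ, lexLe w (rot r w)

/-- `w` followed by its coordinatewise complement. -/
def complAppend {m : ℕ} (w : Fin m → F2) : Fin (2 * m) → F2 :=
  fun i => if h : (i : ℕ) < m then w ⟨(i : ℕ), h⟩
           else w ⟨(i : ℕ) - m, by have := i.isLt; omega⟩ + 1

def IsCoNecklace {m : ℕ} (w : Fin m → F2) : Prop := IsNecklace (complAppend w)

/-- The last `n-1` coordinates of an `n`-stage state. -/
def stTail {n : ℕ} (c : Fin n → F2) : Fin (n - 1) → F2 :=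
  fun i => c ⟨(i : ℕ) + 1, by have := i.isLt; omega⟩

/-- The state map of a successor rule/feedback function:
`(c_0,…,c_{n-1}) ↦ (c_1,…,c_{n-1}, ρ(c))`. -/
def nextMap {n : ℕ} (ρ : (Fin n → F2) → F2) (c : Fin n → F2) : Fin n → F2 :=
  fun i => if h : (i : ℕ) + 1 < n then c ⟨(i : ℕ) + 1, h⟩ else ρ c

/-- Feedback of the pure run-length register: `c_0 + c_1 + c_{n-1}`. -/
noncomputable def fPRR {n : ℕ} (c : Fin n → F2) : F2 :=
  get c 0 + get c 1 + get c (n - 1)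

/-- The successor rule `ρ` generates a de Bruijn sequence of order `n`,
i.e. all `2^n` states lie in a single orbit of its state map. -/
def generatesDB {n : ℕ} (ρ : (Fin n → F2) → F2) : Prop :=
  ∀ x y : Fin n → F2, ∃ k : ℕ, (nextMap ρ)^[k] x = y

def inOrbit {α : Type*} (σ : α → α) (v w : α) : Prop := ∃ k : ℕ, σ^[k] v = w

def orbit {α : Type*} (σ : α → α) (v : α) : Set α := {w | inOrbit σ v w}

/-- `v` is the cycle representative (the lexicographically least state) of its orbit. -/
def isCycleRep {m : ℕ} (σ : (Fin m → F2) → (Fin m → F2)) (v : Fin m → F2) : Prop :=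
  ∀ w ∈ orbit σ v, lexLe v w

/-- Hamming weight. -/
noncomputable def wt {m : ℕ} (u : Fin m → F2) : ℕ :=
  (Finset.univ.filter (fun j : Fin m => u j = 1)).card

/-- The operator `Λ`: cyclically shift a nonzero tuple so that its first `1`
moves to the end (identity on the zero tuple). -/
noncomputable def Lam {m : ℕ} (u : Fin m → F2) : Fin m → F2 :=
  if h : (Finset.univ.filter (fun j : Fin m => u j = 1)).Nonempty then
    rot (((Finset.univ.filter (fun j : Fin m => u j = 1)).min' h).val + 1) u
  else u

/-- The operator `Θ`: if `j ≥ 1` is the least index (0-based) with `u j = 0`,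
rotate left by `j`; fixes tuples with no such index. -/
noncomputable def Theta {m : ℕ} (u : Fin m → F2) : Fin m → F2 :=
  if h : (Finset.univ.filter (fun j : Fin m => 0 < (j : ℕ) ∧ u j = 0)).Nonempty then
    rot ((Finset.univ.filter (fun j : Fin m => 0 < (j : ℕ) ∧ u j = 0)).min' h).val u
  else u

/-- Conjugate state: first bit complemented. -/
def conjSt {n : ℕ} (v : Fin n → F2) : Fin n → F2 :=
  fun i => if (i : ℕ) = 0 then v i + 1 else v i

/-- Companion state: last bit complemented. -/
def compSt {n : ℕ} (v : Fin n → F2) : Fin n → F2 :=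
  fun i => if (i : ℕ) + 1 = n then v i + 1 else v i

/-- `(c_1,…,c_{n-1}, b)`. -/
def shiftIn {n : ℕ} (c : Fin n → F2) (b : F2) : Fin n → F2 :=
  fun i => if h : (i : ℕ) + 1 < n then c ⟨(i : ℕ) + 1, h⟩ else b

/-- `lcm(1,2,…,m)`. -/
def lcmUpTo (m : ℕ) : ℕ := (Finset.Icc 1 m).lcm id

/-- Admissible parameters `1 = k_1 < k_2 < … < k_t = n`, `k_{t-1} < n-1`, `2 ≤ t ≤ n-1`,
for the rules `Ψ₁` and `Υ₁` (the values `k 1, …, k t` of `k : ℕ → ℕ`). -/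
def validParams (n t : ℕ) (k : ℕ → ℕ) : Prop :=
  2 ≤ t ∧ t ≤ n - 1 ∧ k 1 = 1 ∧ k t = n ∧
  (∀ i : ℕ, 1 ≤ i → i < t → k i < k (i + 1)) ∧ k (t - 1) < n - 1

/-- The successor rule `Ψ₁` of Theorem 3.2. -/
noncomputable def Psi1Rule {n : ℕ} (t : ℕ) (k : ℕ → ℕ) (c : Fin n → F2) : F2 :=
  if (get c 1 = 0 ∧ IsCoNecklace (stTail c)) ∨
     (get c 1 = 1 ∧ ∃ i : ℕ, 1 ≤ i ∧ i < t ∧ k i ≤ wt (stTail c) ∧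
        wt (stTail c) < k (i + 1) ∧ IsNecklace (Lam^[k i] (stTail c)))
  then fPRR c + 1 else fPRR c

/-- The successor rule `Ψ₂` of Theorem 3.4. -/
noncomputable def Psi2Rule {n : ℕ} (k : ℕ) (c : Fin n → F2) : F2 :=
  if (get c 1 = 0 ∧ IsCoNecklace (stTail c)) ∨
     (get c 1 = 1 ∧ IsNecklace (Lam^[k] (stTail c)))
  then fPRR c + 1 else fPRR c

/-- `y_c = (c̄_1,…,c̄_{n-2}, 0) ∈ F₂^{n-1}`. -/
noncomputable def yState {n : ℕ} (c : Fin n → F2) : Fin (n - 1) → F2 :=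
  fun i => if (i : ℕ) < n - 2 then get c ((i : ℕ) + 1) + 1 else 0

/-- `w_c = (0, c_1,…,c_{n-2}) ∈ F₂^{n-1}`. -/
noncomputable def wState {n : ℕ} (c : Fin n → F2) : Fin (n - 1) → F2 :=
  fun i => if (i : ℕ) = 0 then 0 else get c (i : ℕ)

/-- The successor rule `Υ₁` of Theorem 4.2. -/
noncomputable def Ups1Rule {n : ℕ} (t : ℕ) (k : ℕ → ℕ) (c : Fin n → F2) : F2 :=
  if (get c (n - 1) = 1 ∧ IsCoNecklace (yState c)) ∨
     (get c (n - 1) = 0 ∧ ∃ i : ℕ, 1 ≤ i ∧ i < t ∧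
        k i ≤ wt (fun j => wState c j + 1) ∧ wt (fun j => wState c j + 1) < k (i + 1) ∧
        IsNecklace (Theta^[k i - 1] (wState c)))
  then fPRR c + 1 else fPRR c

/-- The successor rule `Υ₂` of Theorem 4.3. -/
noncomputable def Ups2Rule {n : ℕ} (k : ℕ) (c : Fin n → F2) : F2 :=
  if (get c (n - 1) = 1 ∧ IsCoNecklace (yState c)) ∨
     (get c (n - 1) = 0 ∧ IsNecklace (Theta^[k] (wState c)))
  then fPRR c + 1 else fPRR c

/-- `x_c` of Theorem 4.1: `(0,c_1,…,c_{n-1})` if `c_{n-1}=0`,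
and `(c̄_1,…,c̄_{n-2},0,c_1)` if `c_{n-1}=1`. -/
noncomputable def xState {n : ℕ} (c : Fin n → F2) : Fin n → F2 :=
  if get c (n - 1) = 0 then (fun i => if (i : ℕ) = 0 then 0 else c i)
  else fun i => if (i : ℕ) < n - 2 then get c ((i : ℕ) + 1) + 1
       else if (i : ℕ) = n - 2 then 0 else get c 1

namespace Sala
open Finset

lemma f2_cases (x : F2) : x = 0 ∨ x = 1 := by
  have h : ∀ y : F2, y = 0 ∨ y = 1 := by decide
  exact h x
lemma f2_val_le_one (x : F2) : x.val ≤ 1 := by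
  have h : ∀ y : F2, y.val ≤ 1 := by decide
  exact h x
lemma f2_add_self (x : F2) : x + x = 0 := by
  have h : ∀ y : F2, y + y = 0 := by decide
  exact h x
lemma f2_val_lt_of_ne (x y : F2) (h : x ≠ y) (h2 : x.val ≤ y.val) : x.val < y.val := by
  have hh : ∀ a b : F2, a ≠ b → a.val ≤ b.val → a.val < b.val := by decide
  exact hh x y h h2

lemma get_lt {n : ℕ} (c : Fin n → F2) (j : ℕ) (h : j < n) : get c j = c ⟨j, h⟩ := dif_pos h
lemma get_ge {n : ℕ} (c : Fin n → F2) (j : ℕ) (h : ¬ j < n) : get c j = 0 := dif_neg h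

lemma sum_range_split (a b : ℕ) (f : ℕ → ℕ) :
    ∑ i ∈ Finset.range (a + b), f i = ∑ i ∈ Finset.range a, f i + ∑ i ∈ Finset.range b, f (a + i) := by
  induction b with
  | zero => simp
  | succ b ih => rw [← Nat.add_assoc, Finset.sum_range_succ, ih, Finset.sum_range_succ, Nat.add_assoc]

/-- value of the first `k` entries of a bit sequence, MSB first -/
noncomputable def valN (k : ℕ) (s : ℕ → F2) : ℕ :=
  ∑ i ∈ Finset.range k, (s i).val * 2 ^ (k - 1 - i)

lemma two_pow_sum (e : ℕ) : ∑ j ∈ Finset.range e, 2 ^ j = 2 ^ e - 1 := by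
  induction e with
  | zero => simp
  | succ e ih => rw [Finset.sum_range_succ, ih]; have := Nat.one_le_two_pow (n := e); omega

lemma sum_two_pow_le (k : ℕ) (f : ℕ → ℕ) (hf : ∀ i, f i ≤ 1) :
    ∑ i ∈ Finset.range k, f i * 2 ^ (k - 1 - i) ≤ 2 ^ k - 1 := by
  calc ∑ i ∈ Finset.range k, f i * 2 ^ (k - 1 - i)
      ≤ ∑ i ∈ Finset.range k, 2 ^ (k - 1 - i) := by
        apply Finset.sum_le_sum; intro i hi
        have := hf i; nlinarith [Nat.two_pow_pos (k-1-i)]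
    _ = ∑ i ∈ Finset.range k, 2 ^ i := by
        rw [← Finset.sum_range_reflect (fun i => 2^i) k]
    _ = 2 ^ k - 1 := two_pow_sum k

lemma valN_le (k : ℕ) (s : ℕ → F2) : valN k s ≤ 2 ^ k - 1 :=
  sum_two_pow_le k _ (fun i => f2_val_le_one _)

lemma valN_lt (k : ℕ) (s : ℕ → F2) : valN k s < 2 ^ k := by
  have := valN_le k s; have := Nat.one_le_two_pow (n := k); omega

lemma valN_congr {k : ℕ} {s t : ℕ → F2} (h : ∀ i < k, s i = t i) : valN k s = valN k t := by
  unfold valN; apply Finset.sum_congr rfl; intro i hi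
  rw [h i (Finset.mem_range.mp hi)]

lemma valN_split (k j : ℕ) (hj : j < k) (u : ℕ → F2) :
    valN k u = (∑ i ∈ Finset.range j, (u i).val * 2 ^ (k - 1 - i))
      + (u j).val * 2 ^ (k-1-j)
      + ∑ i ∈ Finset.range (k - 1 - j), (u (j+1+i)).val * 2 ^ (k - 2 - j - i) := by
  unfold valN
  have hk : k = j + (k - j) := by omega
  have h1 : Finset.range k = Finset.range (j + (k - j)) := by rw [← hk]
  rw [h1, sum_range_split j (k-j) (fun i => (u i).val * 2 ^ (k-1-i))]
  have hk2 : k - j = (k - 1 - j) + 1 := by omega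
  have h2 : Finset.range (k - j) = Finset.range ((k-1-j) + 1) := by rw [← hk2]
  rw [h2, Finset.sum_range_succ']
  have hB : (u (j+0)).val * 2 ^ (k - 1 - (j+0)) = (u j).val * 2 ^ (k-1-j) := by norm_num
  have hC : ∑ i ∈ Finset.range (k-1-j), (u (j+(i+1))).val * 2 ^ (k - 1 - (j+(i+1)))
      = ∑ i ∈ Finset.range (k-1-j), (u (j+1+i)).val * 2 ^ (k - 2 - j - i) := by
    apply Finset.sum_congr rfl
    intro i hi; simp only [Finset.mem_range] at hi
    have e1 : j + (i + 1) = j + 1 + i := by omega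
    have e2 : k - 1 - (j + 1 + i) = k - 2 - j - i := by omega
    rw [e1, e2]
  rw [hB, hC]
  ring

/-- master lex-compare lemma -/
lemma valN_lt_valN {k : ℕ} {s t : ℕ → F2} (j : ℕ) (hj : j < k)
    (hagree : ∀ i < j, s i = t i) (hlt : (s j).val < (t j).val) :
    valN k s < valN k t := by
  rw [valN_split k j hj s, valN_split k j hj t]
  have hA : ∑ i ∈ Finset.range j, (s i).val * 2 ^ (k - 1 - i)
      = ∑ i ∈ Finset.range j, (t i).val * 2 ^ (k - 1 - i) := by
    apply Finset.sum_congr rfl; intro i hi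
    rw [hagree i (Finset.mem_range.mp hi)]
  have hR : ∑ i ∈ Finset.range (k - 1 - j), (s (j+1+i)).val * 2 ^ (k - 2 - j - i)
      ≤ 2 ^ (k-1-j) - 1 := by
    calc ∑ i ∈ Finset.range (k - 1 - j), (s (j+1+i)).val * 2 ^ (k - 2 - j - i)
        = ∑ i ∈ Finset.range (k - 1 - j), (s (j+1+i)).val * 2 ^ ((k-1-j) - 1 - i) := by
          apply Finset.sum_congr rfl; intro i hi; simp only [Finset.mem_range] at hi
          congr 2
          omega
      _ ≤ 2 ^ (k-1-j) - 1 := sum_two_pow_le (k-1-j) _ (fun i => f2_val_le_one _)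
  have hs : (s j).val = 0 := by have := f2_val_le_one (s j); have := f2_val_le_one (t j); omega
  have ht : (t j).val = 1 := by have := f2_val_le_one (t j); omega
  rw [hs, ht]
  have h2 : (0:ℕ) < 2 ^ (k-1-j) := Nat.two_pow_pos _
  omega

lemma valN_eq_iff {k : ℕ} {s t : ℕ → F2} : valN k s = valN k t ↔ ∀ i < k, s i = t i := by
  constructor
  · intro h
    by_contra hc
    push_neg at hc
    obtain ⟨i0, hi0, hne⟩ := hc
    classical
    obtain ⟨j, ⟨⟨hjk, hjne⟩, hmin⟩⟩ := Nat.findX (⟨i0, hi0, hne⟩ : ∃ j, j < k ∧ s j ≠ t j)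
    have hagree : ∀ i < j, s i = t i := by
      intro i hi
      by_contra hne2
      exact absurd ⟨(by omega : i < k), hne2⟩ (hmin i hi)
    rcases Nat.lt_or_ge (s j).val (t j).val with hlt | hge
    · exact absurd h (Nat.ne_of_lt (valN_lt_valN j hjk hagree hlt))
    · have hlt2 : (t j).val < (s j).val := f2_val_lt_of_ne _ _ (Ne.symm hjne) hge
      exact absurd h.symm (Nat.ne_of_lt (valN_lt_valN j hjk (fun i hi => (hagree i hi).symm) hlt2))
  · exact valN_congr

/-- prefix comparison: strict on prefix gives strict on whole -/
lemma valN_prefix_lt {l k : ℕ} (hlk : l ≤ k) {s t : ℕ → F2}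
    (h : valN l s < valN l t) : valN k s < valN k t := by
  classical
  have hne : ¬ (∀ i < l, s i = t i) := by
    intro hall; rw [valN_congr hall] at h; omega
  push_neg at hne
  obtain ⟨i0, hi0, hne0⟩ := hne
  obtain ⟨j, ⟨⟨hjl, hjne⟩, hmin⟩⟩ := Nat.findX (⟨i0, hi0, hne0⟩ : ∃ j, j < l ∧ s j ≠ t j)
  have hagree : ∀ i < j, s i = t i := by
    intro i hi
    by_contra hne2
    exact absurd ⟨(by omega : i < l), hne2⟩ (hmin i hi)
  rcases Nat.lt_or_ge (s j).val (t j).val with hlt | hge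
  · exact valN_lt_valN j (by omega) hagree hlt
  · have hlt2 : (t j).val < (s j).val := f2_val_lt_of_ne _ _ (Ne.symm hjne) hge
    have := valN_lt_valN (k := l) j hjl (fun i hi => (hagree i hi).symm) hlt2
    omega

lemma valN_prefix_le {l k : ℕ} (hlk : l ≤ k) {s t : ℕ → F2}
    (h : valN k s ≤ valN k t) : valN l s ≤ valN l t := by
  by_contra hc
  push_neg at hc
  have := valN_prefix_lt hlk hc
  omega

lemma valN_succ_last (K : ℕ) (s : ℕ → F2) :
    valN (K+1) s = 2 * valN K s + (s K).val := by
  unfold valN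
  rw [Finset.sum_range_succ, Finset.mul_sum]
  have hB : (s K).val * 2 ^ (K + 1 - 1 - K) = (s K).val := by norm_num
  have hC : ∑ i ∈ Finset.range K, (s i).val * 2 ^ (K + 1 - 1 - i)
      = ∑ i ∈ Finset.range K, 2 * ((s i).val * 2 ^ (K - 1 - i)) := by
    apply Finset.sum_congr rfl
    intro i hi; simp only [Finset.mem_range] at hi
    have e1 : K + 1 - 1 - i = (K - 1 - i) + 1 := by omega
    rw [e1, pow_succ]
    ring
  rw [hB, hC]

lemma valN_succ_first (K : ℕ) (s : ℕ → F2) :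
    valN (K+1) s = (s 0).val * 2 ^ K + valN K (fun i => s (i+1)) := by
  unfold valN
  rw [Finset.sum_range_succ']
  have hB : (s 0).val * 2 ^ (K + 1 - 1 - 0) = (s 0).val * 2 ^ K := by norm_num
  have hC : ∑ i ∈ Finset.range K, (s (i+1)).val * 2 ^ (K + 1 - 1 - (i+1))
      = ∑ i ∈ Finset.range K, (s (i+1)).val * 2 ^ (K - 1 - i) := by
    apply Finset.sum_congr rfl
    intro i hi; simp only [Finset.mem_range] at hi
    congr 2
    omega
  rw [hB, hC]
  ring

/-- value of a state -/
noncomputable def sVal {k : ℕ} (v : Fin k → F2) : ℕ := valN k (get v)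

lemma sVal_lt {k : ℕ} (v : Fin k → F2) : sVal v < 2 ^ k := valN_lt _ _

lemma sVal_inj {k : ℕ} {v w : Fin k → F2} (h : sVal v = sVal w) : v = w := by
  funext i
  have := (valN_eq_iff.mp h) i i.isLt
  rwa [get_lt v i i.isLt, get_lt w i i.isLt] at this

/-- lexLe is equivalent to value comparison -/
lemma lexLe_iff {k : ℕ} (v w : Fin k → F2) : lexLe v w ↔ sVal v ≤ sVal w := by
  classical
  constructor
  · intro h
    rcases eq_or_ne v w with rfl | hne
    · exact le_refl _
    · have hex : ∃ j, j < k ∧ get v j ≠ get w j := by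
        by_contra hc
        push_neg at hc
        apply hne
        funext i
        have := hc i i.isLt
        rwa [get_lt v i i.isLt, get_lt w i i.isLt] at this
      obtain ⟨j, ⟨⟨hjk, hjne⟩, hmin⟩⟩ := Nat.findX hex
      have hagree : ∀ i < j, get v i = get w i := by
        intro i hi
        by_contra hne2
        rcases Nat.lt_or_ge i k with hik | hik
        · exact absurd ⟨hik, hne2⟩ (hmin i hi)
        · apply hne2; rw [get_ge v i (by omega), get_ge w i (by omega)]
      have hle := h ⟨j, hjk⟩ (by
        intro i hij
        have := hagree i (by exact_mod_cast hij)
        rwa [get_lt v i i.isLt, get_lt w i i.isLt] at this)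
      rw [← get_lt v j hjk, ← get_lt w j hjk] at hle
      have hlt := f2_val_lt_of_ne _ _ hjne hle
      exact le_of_lt (valN_lt_valN j hjk hagree hlt)
  · intro h j hagree
    by_contra hc
    push_neg at hc
    have hagree' : ∀ i < (j:ℕ), get v i = get w i := by
      intro i hi
      have hik : i < k := by omega
      rw [get_lt v i hik, get_lt w i hik]
      exact hagree ⟨i, hik⟩ (by exact_mod_cast hi)
    have hlt : valN k (get w) < valN k (get v) := by
      apply valN_lt_valN (j:ℕ) j.isLt (fun i hi => (hagree' i hi).symm)
      rw [get_lt v _ j.isLt, get_lt w _ j.isLt]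
      simp only [Fin.eta]
      exact hc
    have : sVal w < sVal v := hlt
    omega

lemma isNecklace_iff {k : ℕ} (u : Fin k → F2) :
    IsNecklace u ↔ ∀ r : ℕ, sVal u ≤ sVal (rot r u) := by
  unfold IsNecklace
  exact forall_congr' (fun r => lexLe_iff u (rot r u))

end Sala
namespace Sala

section Orbits
variable {α : Type*} [Finite α] {f : α → α}

lemma inOrbit_refl (f : α → α) (x : α) : inOrbit f x x := ⟨0, rfl⟩

lemma inOrbit_step (f : α → α) (x : α) : inOrbit f x (f x) := ⟨1, rfl⟩

lemma inOrbit_trans {f : α → α} {x y z : α} (h1 : inOrbit f x y) (h2 : inOrbit f y z) :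
    inOrbit f x z := by
  obtain ⟨k, rfl⟩ := h1
  obtain ⟨l, rfl⟩ := h2
  exact ⟨l + k, (Function.iterate_add_apply f l k x)⟩

lemma exists_period (hf : Function.Injective f) (x : α) : ∃ p, 0 < p ∧ f^[p] x = x := by
  obtain ⟨i, j, hne, heq⟩ := Finite.exists_ne_map_eq_of_infinite (fun k : ℕ => f^[k] x)
  rcases Nat.lt_or_ge i j with hij | hij
  · refine ⟨j - i, by omega, ?_⟩
    have h2 : f^[i] (f^[j-i] x) = f^[i] x := by
      rw [← Function.iterate_add_apply]
      rw [show i + (j - i) = j by omega]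
      exact heq.symm
    exact Function.Injective.iterate hf i h2
  · have hij' : j < i := by omega
    refine ⟨i - j, by omega, ?_⟩
    have h2 : f^[j] (f^[i-j] x) = f^[j] x := by
      rw [← Function.iterate_add_apply]
      rw [show j + (i - j) = i by omega]
      exact heq
    exact Function.Injective.iterate hf j h2

lemma inOrbit_symm (hf : Function.Injective f) {x y : α} (h : inOrbit f x y) :
    inOrbit f y x := by
  obtain ⟨k, rfl⟩ := h
  obtain ⟨p, hp, hpx⟩ := exists_period hf x
  have hkp : k ≤ k * p := Nat.le_mul_of_pos_right k hp
  refine ⟨k * p - k, ?_⟩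
  have hper : ∀ c : ℕ, f^[c * p] x = x := by
    intro c
    induction c with
    | zero => simp
    | succ c ih => rw [Nat.succ_mul, Function.iterate_add_apply, hpx, ih]
  calc f^[k*p - k] (f^[k] x) = f^[k*p - k + k] x := by rw [← Function.iterate_add_apply]
    _ = f^[k*p] x := by rw [show k*p - k + k = k*p by omega]
    _ = x := hper k

/-- the swapped map -/
noncomputable def swapMap (f : α → α) (x y : α) : α → α :=
  fun z => if z = x then f y else if z = y then f x else f z

lemma swapMap_def (f : α → α) (x y z : α) :
    swapMap f x y z = if z = x then f y else if z = y then f x else f z := rfl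

lemma swapMap_eq_comp (f : α → α) (x y : α) :
    swapMap f x y = f ∘ (Equiv.swap x y) := by
  classical
  funext z
  simp only [swapMap, Function.comp_apply, Equiv.swap_apply_def]
  split_ifs <;> rfl

lemma swapMap_injective (hf : Function.Injective f) (x y : α) :
    Function.Injective (swapMap f x y) := by
  rw [swapMap_eq_comp]
  exact hf.comp (Equiv.injective _)

/-- forward direction: orbits of the swapped map are contained in joined orbits -/
lemma swap_forward (hf : Function.Injective f) (x y : α) {z w : α}
    (h : inOrbit (swapMap f x y) z w) :
    inOrbit f z w ∨ (inOrbit f z x ∧ inOrbit f y w) ∨ (inOrbit f z y ∧ inOrbit f x w) := by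
  obtain ⟨k, rfl⟩ := h
  induction k with
  | zero => exact Or.inl (inOrbit_refl f z)
  | succ k ih =>
    rw [Function.iterate_succ_apply']
    set v := (swapMap f x y)^[k] z with hv
    by_cases hvx : v = x
    · have hst : swapMap f x y v = f y := by
        show (if v = x then f y else if v = y then f x else f v) = f y
        rw [if_pos hvx]
      rw [hst]
      rcases ih with h1 | ⟨h1, h2⟩ | ⟨h1, h2⟩
      · rw [hvx] at h1
        exact Or.inr (Or.inl ⟨h1, inOrbit_step f y⟩)
      · rw [hvx] at h2
        have hxy : inOrbit f x y := inOrbit_symm hf h2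
        exact Or.inl (inOrbit_trans h1 (inOrbit_trans hxy (inOrbit_step f y)))
      · rw [hvx] at h2
        exact Or.inl (inOrbit_trans h1 (inOrbit_step f y))
    · by_cases hvy : v = y
      · have hst : swapMap f x y v = f x := by
          show (if v = x then f y else if v = y then f x else f v) = f x
          rw [if_neg hvx, if_pos hvy]
        rw [hst]
        rcases ih with h1 | ⟨h1, h2⟩ | ⟨h1, h2⟩
        · rw [hvy] at h1
          exact Or.inr (Or.inr ⟨h1, inOrbit_step f x⟩)
        · rw [hvy] at h2
          exact Or.inl (inOrbit_trans h1 (inOrbit_step f x))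
        · rw [hvy] at h2
          have hyx : inOrbit f y x := inOrbit_symm hf h2
          exact Or.inl (inOrbit_trans h1 (inOrbit_trans hyx (inOrbit_step f x)))
      · have hst : swapMap f x y v = f v := by
          show (if v = x then f y else if v = y then f x else f v) = f v
          rw [if_neg hvx, if_neg hvy]
        rw [hst]
        rcases ih with h1 | ⟨h1, h2⟩ | ⟨h1, h2⟩
        · exact Or.inl (inOrbit_trans h1 (inOrbit_step f v))
        · exact Or.inr (Or.inl ⟨h1, inOrbit_trans h2 (inOrbit_step f v)⟩)
        · exact Or.inr (Or.inr ⟨h1, inOrbit_trans h2 (inOrbit_step f v)⟩)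

/-- backward: if x,y in different orbits, the swap merges them -/
lemma swap_backward_xy (hf : Function.Injective f) {x y : α} (hxy : ¬ inOrbit f x y) :
    inOrbit (swapMap f x y) x y := by
  classical
  have hex : ∃ p, 0 < p ∧ f^[p] y = y := exists_period hf y
  obtain ⟨p, ⟨⟨hp, hpy⟩, hmin⟩⟩ := Nat.findX hex
  have hne : ∀ j, 1 ≤ j → j < p → f^[j] y ≠ x ∧ f^[j] y ≠ y := by
    intro j h1 h2
    constructor
    · intro hc
      apply hxy
      apply inOrbit_symm hf
      exact ⟨j, hc⟩
    · intro hc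
      exact absurd ⟨by omega, hc⟩ (hmin j h2)
  have key : ∀ j, 1 ≤ j → j ≤ p → (swapMap f x y)^[j] x = f^[j] y := by
    intro j h1 h2
    induction j with
    | zero => omega
    | succ j ih =>
      rcases Nat.eq_or_lt_of_le h1 with h1' | h1'
      · rw [← h1']
        show swapMap f x y x = f^[1] y
        show (if x = x then f y else if x = y then f x else f x) = f^[1] y
        rw [if_pos rfl]
        rfl
      · have hj1 : 1 ≤ j := by omega
        have hjp : j < p := by omega
        have ihj := ih hj1 (by omega)
        rw [Function.iterate_succ_apply', ihj, Function.iterate_succ_apply']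
        have ⟨hne1, hne2⟩ := hne j hj1 hjp
        show (if f^[j] y = x then f y else if f^[j] y = y then f x else f (f^[j] y)) = f (f^[j] y)
        rw [if_neg hne1, if_neg hne2]
  exact ⟨p, by rw [key p (by omega) (le_refl p), hpy]⟩

lemma swap_backward_sub (hf : Function.Injective f) {x y : α} (hxy : ¬ inOrbit f x y)
    {z w : α} (h : inOrbit f z w) : inOrbit (swapMap f x y) z w := by
  classical
  have hstep : ∀ v : α, inOrbit (swapMap f x y) v (f v) := by
    intro v
    by_cases hvx : v = x
    · have h1 : inOrbit (swapMap f x y) x y := swap_backward_xy hf hxy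
      have h2 : swapMap f x y y = f x := by
        show (if y = x then f y else if y = y then f x else f y) = f x
        by_cases hyx : y = x
        · rw [if_pos hyx, hyx]
        · rw [if_neg hyx, if_pos rfl]
      have h3 : inOrbit (swapMap f x y) x (f x) :=
        inOrbit_trans h1 (h2 ▸ inOrbit_step (swapMap f x y) y)
      rw [hvx]
      exact h3
    · by_cases hvy : v = y
      · have hinj := swapMap_injective hf x y
        have h1 : inOrbit (swapMap f x y) x y := swap_backward_xy hf hxy
        have h1' : inOrbit (swapMap f x y) y x := inOrbit_symm hinj h1
        have h2 : swapMap f x y x = f y := by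
          show (if x = x then f y else if x = y then f x else f x) = f y
          rw [if_pos rfl]
        have h3 : inOrbit (swapMap f x y) y (f y) :=
          inOrbit_trans h1' (h2 ▸ inOrbit_step (swapMap f x y) x)
        rw [hvy]
        exact h3
      · have h2 : swapMap f x y v = f v := by
          show (if v = x then f y else if v = y then f x else f v) = f v
          rw [if_neg hvx, if_neg hvy]
        exact h2 ▸ inOrbit_step (swapMap f x y) v
  obtain ⟨k, rfl⟩ := h
  induction k with
  | zero => exact inOrbit_refl _ z
  | succ k ih =>
    rw [Function.iterate_succ_apply']
    exact inOrbit_trans ih (hstep _)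

end Orbits
end Sala
namespace Sala
section PRR
open Finset

variable {m : ℕ}

lemma f2_e1 (a b : F2) : a + (a + b) = b := by
  have h : ∀ x y : F2, x + (x + y) = y := by decide
  exact h a b
lemma f2_e2 (a b e : F2) : a + b + (a + e) = b + e := by
  have h : ∀ x y z : F2, x + y + (x + z) = y + z := by decide
  exact h a b e

/-- the "PRR feedback" and state map on `Fin (m+1) → F2` -/
noncomputable def fb (c : Fin (m+1) → F2) : F2 := get c 0 + get c 1 + get c m

noncomputable def sigma (c : Fin (m+1) → F2) : Fin (m+1) → F2 := shiftIn c (fb c)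

lemma shiftIn_lt {k : ℕ} (c : Fin k → F2) (b : F2) (i : Fin k) (h : (i:ℕ)+1 < k) :
    shiftIn c b i = c ⟨(i:ℕ)+1, h⟩ := dif_pos h

lemma shiftIn_last {k : ℕ} (c : Fin k → F2) (b : F2) (i : Fin k) (h : ¬ ((i:ℕ)+1 < k)) :
    shiftIn c b i = b := dif_neg h

/-- epsilon: the complementing parity of the orbit through c -/
noncomputable def eps (c : Fin (m+1) → F2) : F2 := get c 0 + get c m

/-- explicit formula for the bit-sequence generated from c -/
noncomputable def seqc (c : Fin (m+1) → F2) : ℕ → F2 :=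
  fun i => get c (i % m) + (if (i / m) % 2 = 1 then eps c else 0)

lemma seqc_lt (hm : 1 ≤ m) (c : Fin (m+1) → F2) (i : ℕ) (hi : i < m + 1) :
    seqc c i = get c i := by
  unfold seqc
  rcases Nat.lt_or_ge i m with h | h
  · rw [Nat.mod_eq_of_lt h, Nat.div_eq_of_lt h]
    norm_num
  · have him : i = m := by omega
    subst him
    rw [Nat.mod_self, Nat.div_self (by omega)]
    norm_num [eps]
    exact f2_e1 _ _

lemma seqc_add_m (hm : 1 ≤ m) (c : Fin (m+1) → F2) (t : ℕ) :
    seqc c (t + m) = seqc c t + eps c := by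
  unfold seqc
  rw [Nat.add_mod_right, Nat.add_div_right _ (by omega)]
  rcases Nat.mod_two_eq_zero_or_one (t / m) with h | h
  · rw [h]
    have h2 : (t / m + 1) % 2 = 1 := by omega
    rw [h2]
    norm_num
  · rw [h]
    have h2 : (t / m + 1) % 2 = 0 := by omega
    rw [h2]
    have hx : ∀ a e : F2, a + 0 = a + e + e := by decide
    norm_num
    rw [add_assoc, f2_add_self, add_zero]

lemma seqc_add_2m (hm : 1 ≤ m) (c : Fin (m+1) → F2) (t : ℕ) :
    seqc c (t + 2*m) = seqc c t := by
  have h : t + 2*m = t + m + m := by omega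
  rw [h, seqc_add_m hm, seqc_add_m hm, add_assoc, f2_add_self, add_zero]

lemma seqc_period (hm : 1 ≤ m) (c : Fin (m+1) → F2) (t q : ℕ) :
    seqc c (t + 2*m*q) = seqc c t := by
  induction q with
  | zero => simp
  | succ q ih =>
    have h : t + 2*m*(q+1) = (t + 2*m*q) + 2*m := by ring
    rw [h, seqc_add_2m hm, ih]

lemma seqc_mod (hm : 1 ≤ m) (c : Fin (m+1) → F2) (t : ℕ) :
    seqc c t = seqc c (t % (2*m)) := by
  conv_lhs => rw [show t = t % (2*m) + 2*m*(t/(2*m)) from by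
    have hmd := Nat.mod_add_div t (2*m); omega]
  rw [seqc_period hm]

/-- window at position t -/
noncomputable def win (c : Fin (m+1) → F2) (t : ℕ) : Fin (m+1) → F2 :=
  fun i => seqc c (t + i)

lemma get_win (c : Fin (m+1) → F2) (t j : ℕ) (hj : j < m+1) :
    get (win c t) j = seqc c (t + j) := by
  rw [get_lt _ j hj]
  rfl

lemma win_zero (hm : 1 ≤ m) (c : Fin (m+1) → F2) : win c 0 = c := by
  funext i
  show seqc c (0 + i) = c i
  rw [Nat.zero_add, seqc_lt hm c i i.isLt, get_lt c i i.isLt]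

lemma sigma_win (hm : 1 ≤ m) (c : Fin (m+1) → F2) (t : ℕ) :
    sigma (win c t) = win c (t+1) := by
  funext i
  rcases Nat.lt_or_ge ((i:ℕ)+1) (m+1) with h | h
  · rw [show sigma (win c t) i = shiftIn (win c t) (fb (win c t)) i from rfl,
        shiftIn_lt _ _ i h]
    show seqc c (t + ((i:ℕ)+1)) = seqc c (t + 1 + i)
    congr 1
    omega
  · rw [show sigma (win c t) i = shiftIn (win c t) (fb (win c t)) i from rfl,
        shiftIn_last _ _ i (by omega)]
    have hi : (i:ℕ) = m := by have := i.isLt; omega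
    show fb (win c t) = seqc c (t + 1 + (i:ℕ))
    rw [hi]
    unfold fb
    rw [get_win c t 0 (by omega), get_win c t 1 (by omega), get_win c t m (by omega)]
    rw [Nat.add_zero, seqc_add_m hm]
    have he : seqc c t + seqc c (t+1) + (seqc c t + eps c) = seqc c (t+1) + eps c :=
      f2_e2 _ _ _
    rw [he, ← seqc_add_m hm]

lemma sigma_iter (hm : 1 ≤ m) (c : Fin (m+1) → F2) (k : ℕ) :
    sigma^[k] c = win c k := by
  induction k with
  | zero => simp [win_zero hm]
  | succ k ih => rw [Function.iterate_succ_apply', ih, sigma_win hm]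

lemma win_mod (hm : 1 ≤ m) (c : Fin (m+1) → F2) (t : ℕ) :
    win c t = win c (t % (2*m)) := by
  funext i
  show seqc c (t + i) = seqc c (t % (2*m) + i)
  conv_lhs => rw [show t + (i:ℕ) = (t % (2*m) + i) + 2*m*(t/(2*m)) from by
    have hmd := Nat.mod_add_div t (2*m); omega]
  rw [seqc_period hm]

lemma win_add_period (hm : 1 ≤ m) (c : Fin (m+1) → F2) (t q : ℕ) :
    win c (t + 2*m*q) = win c t := by
  funext i
  show seqc c (t + 2*m*q + i) = seqc c (t + i)
  rw [show t + 2*m*q + (i:ℕ) = (t + i) + 2*m*q by omega, seqc_period hm]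

lemma inOrbit_sigma_iff (hm : 1 ≤ m) (c d : Fin (m+1) → F2) :
    inOrbit sigma c d ↔ ∃ t, win c t = d := by
  constructor
  · rintro ⟨k, rfl⟩
    exact ⟨k, (sigma_iter hm c k).symm⟩
  · rintro ⟨t, rfl⟩
    exact ⟨t, sigma_iter hm c t⟩

/-- the shifted sequence: seqc of a window -/
lemma seqc_win (hm : 1 ≤ m) (c : Fin (m+1) → F2) (t0 : ℕ) (j : ℕ) :
    seqc (win c t0) j = seqc c (t0 + j) := by
  have heps : eps (win c t0) = eps c := by
    unfold eps
    rw [get_win c t0 0 (by omega), get_win c t0 m (by omega), Nat.add_zero, seqc_add_m hm]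
    exact f2_e1 _ _
  induction j using Nat.strong_induction_on with
  | _ j ih =>
    rcases Nat.lt_or_ge j (m+1) with hj | hj
    · rw [seqc_lt hm _ j hj, get_win c t0 j hj]
    · have hjm : j = (j - m) + m := by omega
      rw [hjm, seqc_add_m hm, ih (j-m) (by omega), heps,
          show t0 + (j - m + m) = (t0 + (j-m)) + m by omega, seqc_add_m hm]

lemma win_win (hm : 1 ≤ m) (c : Fin (m+1) → F2) (t0 t : ℕ) :
    win (win c t0) t = win c (t0 + t) := by
  funext i
  show seqc (win c t0) (t + i) = seqc c (t0 + t + i)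
  rw [seqc_win hm, ← Nat.add_assoc]

/-- the key of a state: minimum value over its sigma-orbit -/
noncomputable def keyset (c : Fin (m+1) → F2) : Finset ℕ :=
  (Finset.range (2*m)).image (fun t => sVal (win c t))

lemma keyset_nonempty (hm : 1 ≤ m) (c : Fin (m+1) → F2) : (keyset c).Nonempty := by
  apply Finset.Nonempty.image
  rw [Finset.nonempty_range_iff]
  omega

noncomputable def key (hm : 1 ≤ m) (c : Fin (m+1) → F2) : ℕ :=
  (keyset c).min' (keyset_nonempty hm c)

lemma key_le (hm : 1 ≤ m) (c : Fin (m+1) → F2) (t : ℕ) :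
    key hm c ≤ sVal (win c t) := by
  rw [win_mod hm]
  apply Finset.min'_le
  apply Finset.mem_image_of_mem
  rw [Finset.mem_range]
  exact Nat.mod_lt _ (by omega)

lemma key_exists (hm : 1 ≤ m) (c : Fin (m+1) → F2) :
    ∃ t, sVal (win c t) = key hm c := by
  have := Finset.min'_mem (keyset c) (keyset_nonempty hm c)
  unfold keyset at this
  rw [Finset.mem_image] at this
  obtain ⟨t, ht, h⟩ := this
  exact ⟨t, h⟩

lemma key_le_sval (hm : 1 ≤ m) (c : Fin (m+1) → F2) : key hm c ≤ sVal c := by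
  have := key_le hm c 0
  rwa [win_zero hm] at this

lemma keyset_win (hm : 1 ≤ m) (c : Fin (m+1) → F2) (t0 : ℕ) :
    keyset (win c t0) = keyset c := by
  apply Finset.Subset.antisymm
  · intro v hv
    unfold keyset at hv ⊢
    rw [Finset.mem_image] at hv ⊢
    obtain ⟨t, _, rfl⟩ := hv
    refine ⟨(t0 + t) % (2*m), ?_, ?_⟩
    · rw [Finset.mem_range]; exact Nat.mod_lt _ (by omega)
    · rw [← win_mod hm, ← win_win hm]
  · intro v hv
    unfold keyset at hv ⊢
    rw [Finset.mem_image] at hv ⊢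
    obtain ⟨s, _, rfl⟩ := hv
    refine ⟨(s + 2*m - t0 % (2*m)) % (2*m), ?_, ?_⟩
    · rw [Finset.mem_range]; exact Nat.mod_lt _ (by omega)
    · rw [← win_mod hm, win_win hm]
      congr 1
      have h1 : t0 % (2*m) ≤ t0 := Nat.mod_le _ _
      have h2 : t0 % (2*m) < 2*m := Nat.mod_lt _ (by omega)
      have hmd := Nat.mod_add_div t0 (2*m)
      have h3 : t0 + (s + 2*m - t0 % (2*m)) = s + 2*m + (t0 - t0 % (2*m)) := by omega
      rw [h3]
      have h4 : t0 - t0 % (2*m) = 2*m*(t0/(2*m)) := by omega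
      rw [h4, show s + 2*m + 2*m*(t0/(2*m)) = s + 2*m*(t0/(2*m) + 1) by ring,
          win_add_period hm]

lemma key_win (hm : 1 ≤ m) (c : Fin (m+1) → F2) (t0 : ℕ) :
    key hm (win c t0) = key hm c := by
  unfold key
  congr 1
  exact keyset_win hm c t0

lemma key_inOrbit (hm : 1 ≤ m) {c d : Fin (m+1) → F2} (h : inOrbit sigma c d) :
    key hm c = key hm d := by
  rw [inOrbit_sigma_iff hm] at h
  obtain ⟨t, rfl⟩ := h
  exact (key_win hm c t).symm

end PRR
end Sala
namespace Sala
section Core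
open Finset

variable {m : ℕ}

lemma ext_get {k : ℕ} {a b : Fin k → F2} (h : ∀ j, j < k → get a j = get b j) : a = b := by
  funext i
  have := h i i.isLt
  rwa [get_lt a i i.isLt, get_lt b i i.isLt] at this

lemma rot_get {k : ℕ} (w : Fin k → F2) (r i : ℕ) (hi : i < k) :
    get (rot r w) i = get w ((i + r) % k) := by
  rw [get_lt _ i hi]
  show w _ = get w ((i+r) % k)
  rw [get_lt w ((i+r) % k) (Nat.mod_lt _ (by omega))]

lemma rot_self {k : ℕ} (w : Fin k → F2) (r : ℕ) (hr : r % k = 0) : rot r w = w := by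
  rcases Nat.eq_zero_or_pos k with hk | hk
  · funext i; exact absurd i.isLt (by omega)
  · apply ext_get
    intro j hj
    rw [rot_get w r j hj]
    obtain ⟨q, rfl⟩ := Nat.dvd_of_mod_eq_zero hr
    rw [Nat.add_mul_mod_self_left, Nat.mod_eq_of_lt hj]

lemma sval_zero_iff {k : ℕ} (v : Fin k → F2) : sVal v = 0 ↔ ∀ j, j < k → get v j = 0 := by
  have hz : valN k (fun _ => (0:F2)) = 0 := by
    unfold valN
    apply Finset.sum_eq_zero
    intro i _
    simp
  constructor
  · intro h j hj
    have h2 : valN k (get v) = valN k (fun _ => (0:F2)) := by rw [hz]; exact h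
    exact valN_eq_iff.mp h2 j hj
  · intro h
    show valN k (get v) = 0
    rw [valN_congr (t := fun _ => (0:F2)) h, hz]

lemma valN_last (k : ℕ) (hk : 1 ≤ k) (s : ℕ → F2) :
    valN k s = 2 * valN (k-1) s + (s (k-1)).val := by
  have hksub : k - 1 + 1 = k := by omega
  rw [← hksub, valN_succ_last]
  rw [hksub]

lemma valN_first (k : ℕ) (hk : 1 ≤ k) (s : ℕ → F2) :
    valN k s = (s 0).val * 2 ^ (k-1) + valN (k-1) (fun i => s (i+1)) := by
  have hksub : k - 1 + 1 = k := by omega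
  rw [← hksub, valN_succ_first]
  rw [hksub]

/-- a nonzero val-necklace ends in 1 -/
lemma neck_last_one {k : ℕ} (hk : 1 ≤ k) (u : Fin k → F2)
    (hneck : ∀ r : ℕ, sVal u ≤ sVal (rot r u)) (hnz : sVal u ≠ 0) :
    get u (k-1) = 1 := by
  rcases f2_cases (get u (k-1)) with h0 | h1
  · exfalso
    have hksub : k - 1 + 1 = k := by omega
    have hval : sVal u = 2 * valN (k-1) (get u) + (get u (k-1)).val :=
      valN_last k hk (get u)
    have hrot : sVal (rot (k-1) u) = (get u (k-1)).val * 2^(k-1)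
        + valN (k-1) (fun i => get (rot (k-1) u) (i+1)) := by
      rw [show sVal (rot (k-1) u) = valN k (get (rot (k-1) u)) from rfl,
          valN_first k hk]
      congr 2
      rw [rot_get u (k-1) 0 (by omega), Nat.zero_add, Nat.mod_eq_of_lt (by omega)]
    have hcongr : valN (k-1) (fun i => get (rot (k-1) u) (i+1)) = valN (k-1) (get u) := by
      apply valN_congr
      intro i hi
      rw [rot_get u (k-1) (i+1) (by omega)]
      congr 1
      rw [show i + 1 + (k-1) = i + k by omega, Nat.add_mod_right, Nat.mod_eq_of_lt (by omega)]
    rw [hcongr] at hrot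
    have hle := hneck (k-1)
    rw [hval, hrot, h0] at hle
    norm_num at hle
    apply hnz
    rw [hval, h0]
    norm_num
    omega
  · exact h1

/-- complAppend accessors -/
lemma get_complAppend_lo (hm : 1 ≤ m) (u : Fin m → F2) (j : ℕ) (hj : j < m) :
    get (complAppend u) j = get u j := by
  rw [get_lt _ j (by omega : j < 2*m)]
  show (if h : j < m then u ⟨j, h⟩ else _) = get u j
  rw [dif_pos hj, get_lt u j hj]

lemma get_complAppend_hi (hm : 1 ≤ m) (u : Fin m → F2) (j : ℕ) (hj1 : m ≤ j) (hj2 : j < 2*m) :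
    get (complAppend u) j = get u (j - m) + 1 := by
  rw [get_lt _ j hj2]
  show (if h : j < m then u ⟨j, h⟩ else u ⟨j - m, _⟩ + 1) = get u (j - m) + 1
  rw [dif_neg (by omega), get_lt u (j-m) (by omega)]

/-- the all-zero tuple is a co-necklace -/
lemma zero_coneck (hm : 1 ≤ m) (u : Fin m → F2) (hz : ∀ j, j < m → get u j = 0) :
    IsCoNecklace u := by
  rw [IsCoNecklace, isNecklace_iff]
  intro r
  set W := complAppend u with hW
  have hWlo : ∀ j, j < m → get W j = 0 := by
    intro j hj
    rw [get_complAppend_lo hm u j hj]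
    exact hz j hj
  have hWhi : ∀ j, m ≤ j → j < 2*m → get W j = 1 := by
    intro j hj1 hj2
    rw [get_complAppend_hi hm u j hj1 hj2, hz (j-m) (by omega), zero_add]
  rcases Nat.eq_zero_or_pos (r % (2*m)) with hr | hr
  · rw [rot_self W r hr]
  · set r' := r % (2*m) with hr'
    have hr2 : r' < 2*m := Nat.mod_lt _ (by omega)
    -- pick i0 < m with rot hits a 1
    have hrm : (∃ i0, i0 < m ∧ (i0 + r) % (2*m) ≥ m ∧ (i0 + r) % (2*m) < 2*m
        ∧ ∀ i, i < i0 → (i + r) % (2*m) < m) := by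
      have hmod : ∀ i, (i + r) % (2*m) = (i + r') % (2*m) := by
        intro i
        conv_lhs => rw [show i + r = (i + r') + 2*m*(r/(2*m)) from by
          have := Nat.mod_add_div r (2*m); omega]
        rw [Nat.mul_comm, Nat.add_mul_mod_self_right]
      rcases Nat.lt_or_ge m r' with h | h
      · refine ⟨0, by omega, ?_, ?_, ?_⟩
        · rw [hmod, Nat.zero_add, Nat.mod_eq_of_lt hr2]; omega
        · rw [hmod, Nat.zero_add, Nat.mod_eq_of_lt hr2]; omega
        · intro i hi; omega
      · refine ⟨m - r', by omega, ?_, ?_, ?_⟩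
        · rw [hmod, show m - r' + r' = m by omega, Nat.mod_eq_of_lt (by omega)]
        · rw [hmod, show m - r' + r' = m by omega, Nat.mod_eq_of_lt (by omega)]; omega
        · intro i hi
          rw [hmod, Nat.mod_eq_of_lt (by omega)]
          omega
    obtain ⟨i0, hi0m, hge, hlt2, hbelow⟩ := hrm
    apply le_of_lt
    apply valN_lt_valN i0 (by omega : i0 < 2*m)
    · intro i hi
      rw [rot_get W r i (by omega)]
      rw [hWlo i (by omega), hWlo _ (hbelow i hi)]
    · rw [rot_get W r i0 (by omega), hWlo i0 hi0m, hWhi _ hge hlt2]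
      decide

/-- a co-necklace ends in 0 -/
lemma coneck_last_zero (hm : 1 ≤ m) (u : Fin m → F2) (hu : IsCoNecklace u) :
    get u (m-1) = 0 := by
  rw [IsCoNecklace, isNecklace_iff] at hu
  set W := complAppend u with hW
  have hnz : sVal W ≠ 0 := by
    intro h
    rw [sval_zero_iff] at h
    have h1 := h 0 (by omega)
    have h2 := h m (by omega)
    rw [get_complAppend_lo hm u 0 (by omega)] at h1
    rw [get_complAppend_hi hm u m (le_refl m) (by omega)] at h2
    rw [show m - m = 0 from by omega, h1, zero_add] at h2
    exact one_ne_zero h2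
  have hlast := neck_last_one (by omega : 1 ≤ 2*m) W hu hnz
  rw [get_complAppend_hi hm u (2*m-1) (by omega) (by omega)] at hlast
  rw [show 2*m - 1 - m = m - 1 from by omega] at hlast
  rcases f2_cases (get u (m-1)) with h | h
  · exact h
  · rw [h] at hlast
    exact absurd hlast (by decide)

end Core
end Sala
namespace Sala
section Core2
open Finset

variable {m : ℕ}

noncomputable def xu (u : Fin m → F2) : Fin (m+1) → F2 :=
  fun i => if (i:ℕ) = 0 then 0 else get u ((i:ℕ)-1)
noncomputable def yu (u : Fin m → F2) : Fin (m+1) → F2 :=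
  fun i => if (i:ℕ) = 0 then 1 else get u ((i:ℕ)-1)
noncomputable def zu (u : Fin m → F2) : F2 := get u 0 + get u (m-1) + 1
noncomputable def mu (u : Fin m → F2) : Fin (m+1) → F2 :=
  fun i => if (i:ℕ) < m then get u (i:ℕ) else zu u
noncomputable def snocHead (u : Fin m → F2) : Fin (m+1) → F2 :=
  fun i => if (i:ℕ) < m then get u (i:ℕ) else get u 0

lemma get_xu (u : Fin m → F2) (j : ℕ) (hj : j < m+1) :
    get (xu u) j = if j = 0 then 0 else get u (j-1) := by
  rw [get_lt _ j hj]; rfl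
lemma get_yu (u : Fin m → F2) (j : ℕ) (hj : j < m+1) :
    get (yu u) j = if j = 0 then 1 else get u (j-1) := by
  rw [get_lt _ j hj]; rfl
lemma get_mu (u : Fin m → F2) (j : ℕ) (hj : j < m+1) :
    get (mu u) j = if j < m then get u j else zu u := by
  rw [get_lt _ j hj]; rfl
lemma get_snocHead (u : Fin m → F2) (j : ℕ) (hj : j < m+1) :
    get (snocHead u) j = if j < m then get u j else get u 0 := by
  rw [get_lt _ j hj]; rfl

lemma get_stTail (c : Fin (m+1) → F2) (j : ℕ) (hj : j < m) :
    get (stTail c) j = get c (j+1) := by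
  rw [get_lt _ j hj, get_lt c (j+1) (by omega)]
  rfl

lemma stTail_xu (u : Fin m → F2) : stTail (xu u) = u := by
  apply ext_get
  intro j hj
  rw [get_stTail _ j hj, get_xu u (j+1) (by omega), if_neg (by omega)]
  norm_num

lemma stTail_yu (u : Fin m → F2) : stTail (yu u) = u := by
  apply ext_get
  intro j hj
  rw [get_stTail _ j hj, get_yu u (j+1) (by omega), if_neg (by omega)]
  norm_num

lemma tail_cases (c : Fin (m+1) → F2) (u : Fin m → F2) (h : stTail c = u) :
    c = xu u ∨ c = yu u := by
  rcases f2_cases (get c 0) with h0 | h0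
  · left
    apply ext_get
    intro j hj
    rw [get_xu u j hj]
    rcases Nat.eq_zero_or_pos j with rfl | hjp
    · rw [if_pos rfl]; exact h0
    · rw [if_neg (by omega), ← h, get_stTail c (j-1) (by omega),
          show j - 1 + 1 = j by omega]
  · right
    apply ext_get
    intro j hj
    rw [get_yu u j hj]
    rcases Nat.eq_zero_or_pos j with rfl | hjp
    · rw [if_pos rfl]; exact h0
    · rw [if_neg (by omega), ← h, get_stTail c (j-1) (by omega),
          show j - 1 + 1 = j by omega]

lemma sval_snocHead (u : Fin m → F2) : sVal (snocHead u) = 2 * sVal u + (get u 0).val := by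
  show valN (m+1) (get (snocHead u)) = 2 * valN m (get u) + (get u 0).val
  rw [valN_succ_last]
  congr 2
  · apply valN_congr
    intro i hi
    rw [get_snocHead u i (by omega), if_pos hi]
  · rw [get_snocHead u m (by omega), if_neg (by omega)]

lemma sval_mu (u : Fin m → F2) : sVal (mu u) = 2 * sVal u + (zu u).val := by
  show valN (m+1) (get (mu u)) = 2 * valN m (get u) + (zu u).val
  rw [valN_succ_last]
  congr 2
  · apply valN_congr
    intro i hi
    rw [get_mu u i (by omega), if_pos hi]
  · rw [get_mu u m (by omega), if_neg (by omega)]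

lemma sval_xu (u : Fin m → F2) : sVal (xu u) = sVal u := by
  show valN (m+1) (get (xu u)) = valN m (get u)
  rw [valN_succ_first, get_xu u 0 (by omega), if_pos rfl]
  norm_num
  apply valN_congr
  intro i hi
  rw [get_xu u (i+1) (by omega), if_neg (by omega)]
  norm_num

lemma sval_xu_lt_mu (hm : 1 ≤ m) (u : Fin m → F2) : sVal (xu u) < sVal (mu u) := by
  rw [sval_xu, sval_mu]
  rcases Nat.eq_zero_or_pos (sVal u) with hz | hp
  · have hzz := (sval_zero_iff u).mp hz
    have hz0 : zu u = 1 := by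
      unfold zu
      rw [hzz 0 (by omega), hzz (m-1) (by omega)]
      decide
    rw [hz, hz0]
    decide
  · omega

lemma mu_eq_snocHead (u : Fin m → F2) (hlast : get u (m-1) = 1) : mu u = snocHead u := by
  apply ext_get
  intro j hj
  rw [get_mu u j hj, get_snocHead u j hj]
  rcases Nat.lt_or_ge j m with h | h
  · rw [if_pos h, if_pos h]
  · rw [if_neg (by omega), if_neg (by omega)]
    unfold zu
    rw [hlast]
    have : ∀ a : F2, a + 1 + 1 = a := by decide
    exact this _

/-- key via window minimality at position 1 -/
lemma key_eq_of_min (hm : 1 ≤ m) (c : Fin (m+1) → F2)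
    (hmin : ∀ t, sVal (win c 1) ≤ sVal (win c (1+t))) :
    key hm c = sVal (win c 1) := by
  apply Nat.le_antisymm (key_le hm c 1)
  obtain ⟨T, hT⟩ := key_exists hm c
  rw [← hT]
  rcases Nat.eq_zero_or_pos T with rfl | hTp
  · have h0 : win c 0 = win c (1 + (2*m-1)) := by
      rw [show 1 + (2*m-1) = 0 + 2*m*1 by omega, win_add_period hm]
    rw [h0]
    exact hmin (2*m-1)
  · rw [show T = 1 + (T-1) by omega]
    exact hmin (T-1)

/-- CORE2, necklace case -/
lemma core2_neck (hm : 1 ≤ m) (u : Fin m → F2)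
    (hneck : ∀ r : ℕ, sVal u ≤ sVal (rot r u)) (hlast : get u (m-1) = 1) :
    win (yu u) 1 = mu u ∧ key hm (yu u) = sVal (mu u) := by
  set c := yu u with hc
  have hc0 : get c 0 = 1 := by rw [hc, get_yu u 0 (by omega), if_pos rfl]
  have hcj : ∀ j, 1 ≤ j → j < m+1 → get c j = get u (j-1) := by
    intro j h1 h2
    rw [hc, get_yu u j h2, if_neg (by omega)]
  have heps : eps c = 0 := by
    unfold eps
    rw [hc0, hcj m (by omega) (by omega), hlast]
    decide
  have hseq : ∀ j, seqc c j = get u ((j + (m-1)) % m) := by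
    intro j
    induction j using Nat.strong_induction_on with
    | _ j ih =>
      rcases Nat.lt_or_ge j m with hj | hj
      · rw [seqc_lt hm c j (by omega)]
        rcases Nat.eq_zero_or_pos j with rfl | hjp
        · rw [hc0, Nat.zero_add, Nat.mod_eq_of_lt (by omega), hlast]
        · rw [hcj j hjp (by omega), show j + (m-1) = (j-1) + m by omega,
              Nat.add_mod_right, Nat.mod_eq_of_lt (by omega)]
      · rw [show j = (j - m) + m by omega, seqc_add_m hm, heps, add_zero,
            ih (j-m) (by omega), show j - m + m + (m-1) = (j - m + (m-1)) + m by omega,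
            Nat.add_mod_right]
  have hwin : ∀ t, win c (1+t) = snocHead (rot t u) := by
    intro t
    apply ext_get
    intro j hj
    have hseqj : get (win c (1+t)) j = get u ((t + j) % m) := by
      rw [get_win c (1+t) j hj, hseq (1+t+j),
          show 1 + t + j + (m-1) = (t+j) + m by omega, Nat.add_mod_right]
    rw [hseqj, get_snocHead _ j hj]
    rcases Nat.lt_or_ge j m with h | h
    · rw [if_pos h, rot_get u t j h, Nat.add_comm j t]
    · have hjm : j = m := by omega
      rw [if_neg (by omega), rot_get u t 0 (by omega), Nat.zero_add, hjm,
          Nat.add_mod_right]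
  have hw1 : win c 1 = mu u := by
    have h1 : win c (1+0) = snocHead (rot 0 u) := hwin 0
    rw [rot_self u 0 (Nat.zero_mod m)] at h1
    have h1' : win c 1 = snocHead u := h1
    rw [h1', mu_eq_snocHead u hlast]
  constructor
  · exact hw1
  · rw [← hw1]
    apply key_eq_of_min hm c
    intro t
    rw [hw1, hwin t, mu_eq_snocHead u hlast, sval_snocHead, sval_snocHead]
    rcases Nat.lt_or_eq_of_le (hneck t) with hlt | heq
    · have b1 := f2_val_le_one (get u 0)
      have b2 := f2_val_le_one (get (rot t u) 0)
      omega
    · rw [← sVal_inj heq]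

/-- CORE2, co-necklace case -/
lemma core2_coneck (hm : 1 ≤ m) (u : Fin m → F2)
    (hcon : IsCoNecklace u) :
    win (yu u) 1 = mu u ∧ key hm (yu u) = sVal (mu u) := by
  have hlast : get u (m-1) = 0 := coneck_last_zero hm u hcon
  rw [IsCoNecklace, isNecklace_iff] at hcon
  set W := complAppend u with hWdef
  set c := yu u with hc
  have hc0 : get c 0 = 1 := by rw [hc, get_yu u 0 (by omega), if_pos rfl]
  have hcj : ∀ j, 1 ≤ j → j < m+1 → get c j = get u (j-1) := by
    intro j h1 h2
    rw [hc, get_yu u j h2, if_neg (by omega)]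
  have heps : eps c = 1 := by
    unfold eps
    rw [hc0, hcj m (by omega) (by omega), hlast]
    decide
  have hseqW : ∀ j, seqc c (1 + j) = get W (j % (2*m)) := by
    intro j
    induction j using Nat.strong_induction_on with
    | _ j ih =>
      rcases Nat.lt_or_ge j m with hj | hj
      · rw [seqc_lt hm c (1+j) (by omega), Nat.mod_eq_of_lt (by omega : j < 2*m),
            hcj (1+j) (by omega) (by omega), hWdef, get_complAppend_lo hm u j hj]
        norm_num
      · rcases Nat.lt_or_ge j (2*m) with hj2 | hj2
        · rw [show 1 + j = (1 + (j - m)) + m by omega, seqc_add_m hm, heps,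
              ih (j-m) (by omega), Nat.mod_eq_of_lt (by omega : j - m < 2*m),
              Nat.mod_eq_of_lt hj2, hWdef,
              get_complAppend_hi hm u j hj hj2, get_complAppend_lo hm u (j-m) (by omega)]
        · rw [show 1 + j = (1 + (j - 2*m)) + 2*m by omega, seqc_add_2m hm,
              ih (j - 2*m) (by omega),
              show j % (2*m) = (j - 2*m) % (2*m) from by
                conv_lhs => rw [show j = (j - 2*m) + 2*m by omega]
                rw [Nat.add_mod_right]]
  have hwinget : ∀ t j, j < m+1 → get (win c (1+t)) j = get W ((t + j) % (2*m)) := by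
    intro t j hj
    rw [get_win c (1+t) j hj, show 1 + t + j = 1 + (t + j) by omega, hseqW]
  have hsvalwin : ∀ t, sVal (win c (1+t)) = valN (m+1) (get (rot t W)) := by
    intro t
    apply valN_congr
    intro j hj
    rw [hwinget t j hj, rot_get W t j (by omega), Nat.add_comm j t]
  have hsval1 : sVal (win c 1) = valN (m+1) (get W) := by
    have h := hsvalwin 0
    rw [rot_self W 0 (Nat.zero_mod (2*m))] at h
    exact h
  have hmin : ∀ t, sVal (win c 1) ≤ sVal (win c (1+t)) := by
    intro t
    rw [hsval1, hsvalwin t]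
    exact valN_prefix_le (by omega : m+1 ≤ 2*m) (hcon t)
  have hw1 : win c 1 = mu u := by
    apply ext_get
    intro j hj
    rw [hwinget 0 j hj, Nat.zero_add, Nat.mod_eq_of_lt (by omega : j < 2*m),
        get_mu u j hj]
    rcases Nat.lt_or_ge j m with h | h
    · rw [if_pos h, hWdef, get_complAppend_lo hm u j h]
    · have hjm : j = m := by omega
      rw [if_neg (by omega), hjm, hWdef, get_complAppend_hi hm u m (le_refl m) (by omega),
          show m - m = 0 by omega]
      unfold zu
      rw [hlast, add_zero]
  exact ⟨hw1, by rw [← hw1]; exact key_eq_of_min hm c hmin⟩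

/-- CORE2 -/
lemma core2 (hm : 1 ≤ m) (u : Fin m → F2) (hu : IsNecklace u ∨ IsCoNecklace u) :
    win (yu u) 1 = mu u ∧ key hm (yu u) = sVal (mu u) := by
  rcases f2_cases (get u (m-1)) with hlast | hlast
  · -- ends in 0: must be (or can be taken as) co-necklace
    rcases hu with hneck | hcon
    · -- necklace ending in 0 is the zero tuple, which is a co-necklace
      rw [isNecklace_iff] at hneck
      rcases Nat.eq_zero_or_pos (sVal u) with hz | hp
      · exact core2_coneck hm u (zero_coneck hm u ((sval_zero_iff u).mp hz))
      · have := neck_last_one hm u hneck (by omega)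
        rw [hlast] at this
        exact absurd this (by decide)
    · exact core2_coneck hm u hcon
  · -- ends in 1: necklace
    rcases hu with hneck | hcon
    · rw [isNecklace_iff] at hneck
      exact core2_neck hm u hneck hlast
    · have := coneck_last_zero hm u hcon
      rw [hlast] at this
      exact absurd this (by decide)

end Core2
end Sala
namespace Sala
section Core1
open Finset

variable {m : ℕ}

/-- CORE1: every orbit is the zero orbit or contains `yu u` for a necklace-or-co-necklace u,
with key = sVal (mu u). -/
lemma core1 (hm : 1 ≤ m) (c : Fin (m+1) → F2) :
    inOrbit sigma c (fun _ => (0:F2)) ∨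
    ∃ u : Fin m → F2, (IsNecklace u ∨ IsCoNecklace u) ∧ inOrbit sigma c (yu u)
      ∧ key hm c = sVal (mu u) := by
  obtain ⟨T, hT⟩ := key_exists hm c
  set d := win c T with hd
  have hcd : inOrbit sigma c d := ⟨T, sigma_iter hm c T⟩
  have hmin : ∀ t, sVal d ≤ sVal (win d t) := by
    intro t
    rw [hd, win_win hm]
    rw [show sVal (win c T) = key hm c from hT]
    exact key_le hm c (T + t)
  set u : Fin m → F2 := fun i => d ⟨(i:ℕ), by omega⟩ with hu
  have hgu : ∀ j, j < m → get u j = get d j := by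
    intro j hj
    rw [get_lt u j hj, get_lt d j (by omega)]
  rcases f2_cases (eps d) with heps | heps
  · -- eps = 0 : periodic case
    have hseq : ∀ j, seqc d j = get d (j % m) := by
      intro j
      unfold seqc
      rw [heps]
      have h2 : (if (j / m) % 2 = 1 then (0:F2) else 0) = 0 := ite_self 0
      rw [h2, add_zero]
    have hwin : ∀ t, win d t = snocHead (rot t u) := by
      intro t
      apply ext_get
      intro j hj
      rw [get_win d t j hj, hseq (t+j), get_snocHead _ j hj]
      rcases Nat.lt_or_ge j m with h | h
      · rw [if_pos h, rot_get u t j h, Nat.add_comm j t, hgu _ (Nat.mod_lt _ (by omega))]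
      · have hjm : j = m := by omega
        rw [if_neg (by omega), rot_get u t 0 (by omega), Nat.zero_add, hjm,
            Nat.add_mod_right, hgu _ (Nat.mod_lt _ (by omega))]
    have hd0 : d = snocHead u := by
      have h := hwin 0
      rw [rot_self u 0 (Nat.zero_mod m)] at h
      calc d = win d 0 := (win_zero hm d).symm
        _ = snocHead u := h
    have hneck : ∀ r : ℕ, sVal u ≤ sVal (rot r u) := by
      intro r
      by_contra hcon
      push_neg at hcon
      have h1 : sVal (snocHead (rot r u)) < sVal (snocHead u) := by
        rw [sval_snocHead, sval_snocHead]
        have b1 := f2_val_le_one (get (rot r u) 0)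
        have b2 := f2_val_le_one (get u 0)
        omega
      rw [← hwin r, ← hd0] at h1
      exact absurd (hmin r) (by omega)
    rcases Nat.eq_zero_or_pos (sVal u) with hz | hp
    · -- zero orbit
      left
      have hdz : d = (fun _ => (0:F2)) := by
        apply ext_get
        intro j hj
        have hz2 := (sval_zero_iff u).mp hz
        have hrhs : get (fun _ : Fin (m+1) => (0:F2)) j = 0 := by
          rw [get_lt _ j hj]
        rw [hrhs, hd0, get_snocHead u j hj]
        rcases Nat.lt_or_ge j m with h | h
        · rw [if_pos h]; exact hz2 j h
        · rw [if_neg (by omega)]; exact hz2 0 (by omega)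
      rw [← hdz]
      exact hcd
    · right
      have hlast : get u (m-1) = 1 := neck_last_one hm u hneck (by omega)
      have hyu : win d (2*m-1) = yu u := by
        apply ext_get
        intro j hj
        rw [get_win d (2*m-1) j hj, hseq, get_yu u j hj]
        rcases Nat.eq_zero_or_pos j with rfl | hjp
        · have hidx : (2*m-1+0) % m = m - 1 := by
            rw [Nat.add_zero, show 2*m-1 = (m-1) + m by omega, Nat.add_mod_right,
                Nat.mod_eq_of_lt (by omega)]
          rw [if_pos rfl, hidx, ← hgu _ (by omega), hlast]
        · have hidx : (2*m-1+j) % m = j - 1 := by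
            rw [show 2*m-1+j = (j-1) + m + m by omega, Nat.add_mod_right,
                Nat.add_mod_right, Nat.mod_eq_of_lt (by omega)]
          rw [if_neg (by omega), hidx, ← hgu _ (by omega)]
      refine ⟨u, Or.inl ((isNecklace_iff u).mpr hneck), ?_, ?_⟩
      · exact inOrbit_trans hcd ⟨2*m-1, by rw [sigma_iter hm d (2*m-1), hyu]⟩
      · rw [← hT, hd0, mu_eq_snocHead u hlast]
  · -- eps = 1 : complementing case
    set W : Fin (2*m) → F2 := fun j => seqc d (j:ℕ) with hWdef
    have hgW : ∀ j, j < 2*m → get W j = seqc d j := by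
      intro j hj
      rw [get_lt _ j hj]
    have hseq : ∀ j, seqc d j = get W (j % (2*m)) := by
      intro j
      induction j using Nat.strong_induction_on with
      | _ j ih =>
        rcases Nat.lt_or_ge j (2*m) with hj | hj
        · rw [Nat.mod_eq_of_lt hj, hgW j hj]
        · rw [show j = (j - 2*m) + 2*m by omega, seqc_add_2m hm, ih (j - 2*m) (by omega),
              Nat.add_mod_right]
    have hcompl2 : ∀ a, get W ((a + m) % (2*m)) = get W (a % (2*m)) + 1 := by
      intro a
      rw [← hseq (a+m), ← hseq a, seqc_add_m hm, heps]
    have hwinget : ∀ t j, j < m+1 → get (win d t) j = get W ((t + j) % (2*m)) := by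
      intro t j hj
      rw [get_win d t j hj, hseq]
    have hdW : ∀ j, j < m+1 → get d j = get W (j % (2*m)) := by
      intro j hj
      have h := hwinget 0 j hj
      rw [win_zero hm d, Nat.zero_add] at h
      exact h
    have hWneck : ∀ r : ℕ, sVal W ≤ sVal (rot r W) := by
      intro r
      by_contra hcon
      push_neg at hcon
      -- window comparison
      have hpre1 : sVal (win d r) = valN (m+1) (get (rot r W)) := by
        apply valN_congr
        intro j hj
        rw [hwinget r j hj, rot_get W r j (by omega), Nat.add_comm j r]
      have hpre0 : sVal d = valN (m+1) (get W) := by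
        apply valN_congr
        intro j hj
        rw [hdW j hj, Nat.mod_eq_of_lt (by omega)]
      have hge : valN (m+1) (get W) ≤ valN (m+1) (get (rot r W)) := by
        rw [← hpre0, ← hpre1]
        exact hmin r
      have hle : valN (m+1) (get (rot r W)) ≤ valN (m+1) (get W) :=
        valN_prefix_le (by omega : m+1 ≤ 2*m) (le_of_lt hcon)
      have heq2 : valN (m+1) (get (rot r W)) = valN (m+1) (get W) := le_antisymm hle hge
      have hag : ∀ i, i < m+1 → get (rot r W) i = get W i := valN_eq_iff.mp heq2
      have hWstep : ∀ j, m ≤ j → j < 2*m → get W j = get W (j - m) + 1 := by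
        intro j hj1 hj2
        have h2 := hcompl2 (j - m)
        rw [show j - m + m = j by omega, Nat.mod_eq_of_lt hj2,
            Nat.mod_eq_of_lt (by omega : j - m < 2*m)] at h2
        exact h2
      have hrot_eq : rot r W = W := by
        apply ext_get
        intro j hj
        rcases Nat.lt_or_ge j (m+1) with h | h
        · exact hag j h
        · have h1 : get (rot r W) j = get (rot r W) (j - m) + 1 := by
            rw [rot_get W r j hj, rot_get W r (j-m) (by omega)]
            have h2 := hcompl2 (j - m + r)
            rw [show j - m + r + m = j + r by omega] at h2
            exact h2
          rw [h1, hag (j-m) (by omega), ← hWstep j (by omega) hj]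
      rw [hrot_eq] at hcon
      exact absurd hcon (lt_irrefl _)
    have hWstep : ∀ j, m ≤ j → j < 2*m → get W j = get W (j - m) + 1 := by
      intro j hj1 hj2
      have h2 := hcompl2 (j - m)
      rw [show j - m + m = j by omega, Nat.mod_eq_of_lt hj2,
          Nat.mod_eq_of_lt (by omega : j - m < 2*m)] at h2
      exact h2
    have hdW' : ∀ j, j < m+1 → get d j = get W j := by
      intro j hj
      rw [hdW j hj, Nat.mod_eq_of_lt (by omega)]
    have hcompl_u : complAppend u = W := by
      apply ext_get
      intro j hj
      rcases Nat.lt_or_ge j m with h | h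
      · rw [get_complAppend_lo hm u j h, hgu j h, hdW' j (by omega)]
      · rw [get_complAppend_hi hm u j h hj, hgu (j-m) (by omega),
            hdW' (j-m) (by omega), ← hWstep j h hj]
    have hcon2 : IsCoNecklace u := by
      rw [IsCoNecklace, hcompl_u]
      exact (isNecklace_iff W).mpr hWneck
    have hlast : get u (m-1) = 0 := coneck_last_zero hm u hcon2
    have hdmu : d = mu u := by
      apply ext_get
      intro j hj
      rw [get_mu u j hj]
      rcases Nat.lt_or_ge j m with h | h
      · rw [if_pos h, hgu j h]
      · have hjm : j = m := by omega
        rw [if_neg (by omega), hjm, hdW' m (by omega),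
            hWstep m (le_refl m) (by omega), show m - m = 0 by omega,
            ← hdW' 0 (by omega), ← hgu 0 (by omega)]
        unfold zu
        rw [hlast, add_zero]
    have hyu : win d (2*m-1) = yu u := by
      apply ext_get
      intro j hj
      rw [hwinget (2*m-1) j hj, get_yu u j hj]
      rcases Nat.eq_zero_or_pos j with rfl | hjp
      · have hidx : (2*m-1+0) % (2*m) = 2*m-1 := by
          rw [Nat.add_zero]; exact Nat.mod_eq_of_lt (by omega)
        rw [if_pos rfl, hidx,
            hWstep (2*m-1) (by omega) (by omega), show 2*m-1-m = m-1 by omega,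
            ← hdW' (m-1) (by omega), ← hgu (m-1) (by omega), hlast]
        decide
      · have hidx : (2*m-1+j) % (2*m) = j - 1 := by
          rw [show 2*m-1+j = (j-1) + 2*m by omega, Nat.add_mod_right]
          exact Nat.mod_eq_of_lt (by omega)
        rw [if_neg (by omega), hidx,
            ← hdW' (j-1) (by omega), ← hgu (j-1) (by omega)]
    right
    refine ⟨u, Or.inr hcon2, ?_, ?_⟩
    · exact inOrbit_trans hcd ⟨2*m-1, by rw [sigma_iter hm d (2*m-1), hyu]⟩
    · rw [← hT, hdmu]

end Core1
end Sala
namespace Sala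
section Assembly
open Finset

variable {m : ℕ}

/-- the modified map: flip the feedback when the tail lies in W -/
noncomputable def tau (W : Finset (Fin m → F2)) (c : Fin (m+1) → F2) : Fin (m+1) → F2 :=
  shiftIn c (fb c + (if stTail c ∈ W then 1 else 0))

lemma tau_empty : tau (∅ : Finset (Fin m → F2)) = sigma := by
  funext c
  unfold tau sigma
  rw [if_neg (Finset.notMem_empty _), add_zero]

lemma xu_ne_yu (u : Fin m → F2) : xu u ≠ yu u := by
  intro h
  have h2 := congrFun h ⟨0, by omega⟩
  have hx : xu u ⟨0, by omega⟩ = 0 := if_pos rfl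
  have hy : yu u ⟨0, by omega⟩ = 1 := if_pos rfl
  rw [hx, hy] at h2
  exact absurd h2 (by decide)

lemma tau_tail_eq {W : Finset (Fin m → F2)} {a b : Fin (m+1) → F2}
    (hab : tau W a = tau W b) : stTail a = stTail b := by
  funext i
  have hcf := congrFun hab ⟨(i:ℕ), by omega⟩
  have hlt : ((⟨(i:ℕ), by omega⟩ : Fin (m+1)):ℕ) + 1 < m+1 := by
    have := i.isLt
    simpa using by omega
  rw [show tau W a ⟨(i:ℕ), by omega⟩ = a ⟨(i:ℕ)+1, by have := i.isLt; omega⟩ from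
        shiftIn_lt a _ _ (by have := i.isLt; simpa using by omega),
      show tau W b ⟨(i:ℕ), by omega⟩ = b ⟨(i:ℕ)+1, by have := i.isLt; omega⟩ from
        shiftIn_lt b _ _ (by have := i.isLt; simpa using by omega)] at hcf
  exact hcf

lemma tau_inj (hm : 1 ≤ m) (W : Finset (Fin m → F2)) : Function.Injective (tau W) := by
  intro a b hab
  have htail : stTail a = stTail b := tau_tail_eq hab
  have hget : ∀ j, 1 ≤ j → j < m+1 → get a j = get b j := by
    intro j h1 h2
    have := congrFun (congrArg get htail) (j-1)
    rw [get_stTail a (j-1) (by omega), get_stTail b (j-1) (by omega),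
        show j - 1 + 1 = j by omega] at this
    exact this
  have hlast := congrFun hab ⟨m, by omega⟩
  rw [show tau W a ⟨m, by omega⟩ = fb a + (if stTail a ∈ W then 1 else 0) from
        shiftIn_last a _ _ (by simp),
      show tau W b ⟨m, by omega⟩ = fb b + (if stTail b ∈ W then 1 else 0) from
        shiftIn_last b _ _ (by simp), htail] at hlast
  have hfb : fb a = fb b := add_right_cancel hlast
  unfold fb at hfb
  rw [hget 1 (le_refl 1) (by omega), hget m hm (by omega)] at hfb
  have h0 : get a 0 = get b 0 := by
    have := add_right_cancel (add_right_cancel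
      (show get a 0 + get b 1 + get b m = get b 0 + get b 1 + get b m from hfb))
    exact this
  apply ext_get
  intro j hj
  rcases Nat.eq_zero_or_pos j with rfl | hjp
  · exact h0
  · exact hget j hjp hj

lemma tau_insert (hm : 1 ≤ m) (W : Finset (Fin m → F2)) (u : Fin m → F2) (hu : u ∉ W) :
    tau (insert u W) = swapMap (tau W) (xu u) (yu u) := by
  classical
  funext c
  rw [swapMap_def]
  by_cases hc : stTail c = u
  · rcases tail_cases c u hc with rfl | rfl
    · rw [if_pos rfl]
      -- tau (insert u W) (xu u) = tau W (yu u)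
      unfold tau
      funext i
      rcases Nat.lt_or_ge ((i:ℕ)+1) (m+1) with h | h
      · rw [shiftIn_lt _ _ i h, shiftIn_lt _ _ i h]
        show (if ((⟨(i:ℕ)+1, h⟩ : Fin (m+1)):ℕ) = 0 then (0:F2) else get u (((⟨(i:ℕ)+1, h⟩ : Fin (m+1)):ℕ)-1))
          = (if ((⟨(i:ℕ)+1, h⟩ : Fin (m+1)):ℕ) = 0 then (1:F2) else get u (((⟨(i:ℕ)+1, h⟩ : Fin (m+1)):ℕ)-1))
        rw [if_neg (by simp), if_neg (by simp)]
      · rw [shiftIn_last _ _ i (by omega), shiftIn_last _ _ i (by omega)]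
        rw [stTail_xu, stTail_yu, if_pos (Finset.mem_insert_self u W), if_neg hu, add_zero]
        unfold fb
        rw [get_xu u 0 (by omega), if_pos rfl, get_yu u 0 (by omega), if_pos rfl,
            get_xu u 1 (by omega), get_yu u 1 (by omega),
            get_xu u m (by omega), get_yu u m (by omega)]
        rcases Nat.eq_zero_or_pos m with rfl | hmp
        · omega
        · rw [if_neg (by omega), if_neg (by omega), if_neg (by omega), if_neg (by omega)]
          have : ∀ p q : F2, 0 + p + q + 1 = 1 + p + q := by decide
          exact this _ _
    · rw [if_neg (Ne.symm (xu_ne_yu u)), if_pos rfl]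
      unfold tau
      funext i
      rcases Nat.lt_or_ge ((i:ℕ)+1) (m+1) with h | h
      · rw [shiftIn_lt _ _ i h, shiftIn_lt _ _ i h]
        show (if ((⟨(i:ℕ)+1, h⟩ : Fin (m+1)):ℕ) = 0 then (1:F2) else get u (((⟨(i:ℕ)+1, h⟩ : Fin (m+1)):ℕ)-1))
          = (if ((⟨(i:ℕ)+1, h⟩ : Fin (m+1)):ℕ) = 0 then (0:F2) else get u (((⟨(i:ℕ)+1, h⟩ : Fin (m+1)):ℕ)-1))
        rw [if_neg (by simp), if_neg (by simp)]
      · rw [shiftIn_last _ _ i (by omega), shiftIn_last _ _ i (by omega)]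
        rw [stTail_xu, stTail_yu, if_pos (Finset.mem_insert_self u W), if_neg hu, add_zero]
        unfold fb
        rw [get_xu u 0 (by omega), if_pos rfl, get_yu u 0 (by omega), if_pos rfl,
            get_xu u 1 (by omega), get_yu u 1 (by omega),
            get_xu u m (by omega), get_yu u m (by omega)]
        rcases Nat.eq_zero_or_pos m with rfl | hmp
        · omega
        · rw [if_neg (by omega), if_neg (by omega), if_neg (by omega), if_neg (by omega)]
          have : ∀ p q : F2, 1 + p + q + 1 = 0 + p + q := by decide
          exact this _ _
  · have hcx : c ≠ xu u := by
      intro hc2; apply hc; rw [hc2, stTail_xu]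
    have hcy : c ≠ yu u := by
      intro hc2; apply hc; rw [hc2, stTail_yu]
    rw [if_neg hcx, if_neg hcy]
    unfold tau
    have hmem : (stTail c ∈ insert u W) ↔ (stTail c ∈ W) := by
      rw [Finset.mem_insert]
      constructor
      · rintro (h | h)
        · exact absurd h hc
        · exact h
      · exact Or.inr
    rw [if_congr hmem rfl rfl]

/-- the set of necklaces and co-necklaces -/
noncomputable def Sset (m : ℕ) : Finset (Fin m → F2) :=
  Finset.univ.filter (fun u => IsNecklace u ∨ IsCoNecklace u)

lemma mem_Sset (u : Fin m → F2) : u ∈ Sset m ↔ (IsNecklace u ∨ IsCoNecklace u) := by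
  unfold Sset
  rw [Finset.mem_filter]
  simp

/-- the invariant for the cycle-joining induction -/
def Inv (hm : 1 ≤ m) (W : Finset (Fin m → F2)) : Prop :=
  (∀ z w, inOrbit sigma z w → inOrbit (tau W) z w) ∧
  (∀ u ∈ W, inOrbit (tau W) (xu u) (yu u)) ∧
  (∀ z w, inOrbit (tau W) z w → key hm z < key hm w → ∃ u ∈ W, sVal (mu u) ≤ key hm w)

lemma inv_empty (hm : 1 ≤ m) : Inv hm (∅ : Finset (Fin m → F2)) := by
  refine ⟨?_, ?_, ?_⟩
  · intro z w h; rwa [tau_empty]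
  · intro u hu; exact absurd hu (Finset.notMem_empty u)
  · intro z w h hk
    rw [tau_empty] at h
    rw [key_inOrbit hm h] at hk
    omega

lemma inv_step (hm : 1 ≤ m) (W : Finset (Fin m → F2)) (u₀ : Fin m → F2)
    (hS : u₀ ∈ Sset m) (hW : u₀ ∉ W)
    (horder : ∀ u ∈ W, sVal (mu u₀) < sVal (mu u))
    (hInv : Inv hm W) : Inv hm (insert u₀ W) := by
  obtain ⟨inv1, inv2, inv3⟩ := hInv
  have hfinj : Function.Injective (tau W) := tau_inj hm W
  have hins : tau (insert u₀ W) = swapMap (tau W) (xu u₀) (yu u₀) := tau_insert hm W u₀ hW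
  have hky : key hm (yu u₀) = sVal (mu u₀) := by
    have := core2 hm u₀ ((mem_Sset u₀).mp hS)
    exact this.2
  have hkx : key hm (xu u₀) < sVal (mu u₀) :=
    lt_of_le_of_lt (key_le_sval hm (xu u₀)) (sval_xu_lt_mu hm u₀)
  have hxyne : ¬ inOrbit (tau W) (xu u₀) (yu u₀) := by
    intro hcon
    obtain ⟨u, huW, hule⟩ := inv3 _ _ hcon (by omega)
    rw [hky] at hule
    exact absurd hule (by have := horder u huW; omega)
  refine ⟨?_, ?_, ?_⟩
  · intro z w h
    rw [hins]
    exact swap_backward_sub hfinj hxyne (inv1 z w h)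
  · intro u hu
    rw [hins]
    rcases Finset.mem_insert.mp hu with rfl | huW
    · exact swap_backward_xy hfinj hxyne
    · exact swap_backward_sub hfinj hxyne (inv2 u huW)
  · intro z w h hk
    rw [hins] at h
    rcases swap_forward hfinj _ _ h with h1 | ⟨h1, h2⟩ | ⟨h1, h2⟩
    · obtain ⟨u, huW, hule⟩ := inv3 z w h1 hk
      exact ⟨u, Finset.mem_insert_of_mem huW, hule⟩
    · -- z ~ xu, yu ~ w
      rcases Nat.lt_trichotomy (key hm w) (key hm (yu u₀)) with hlt | heq | hgt
      · exfalso
        obtain ⟨u, huW, hule⟩ := inv3 _ _ (inOrbit_symm hfinj h2) hlt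
        rw [hky] at hule
        exact absurd hule (by have := horder u huW; omega)
      · refine ⟨u₀, Finset.mem_insert_self u₀ W, ?_⟩
        rw [← hky, heq]
      · obtain ⟨u, huW, hule⟩ := inv3 _ _ h2 hgt
        exact ⟨u, Finset.mem_insert_of_mem huW, hule⟩
    · -- z ~ yu, xu ~ w
      have hzy : ¬ key hm z < key hm (yu u₀) := by
        intro hlt
        obtain ⟨u, huW, hule⟩ := inv3 _ _ h1 hlt
        rw [hky] at hule
        exact absurd hule (by have := horder u huW; omega)
      rw [hky] at hzy
      refine ⟨u₀, Finset.mem_insert_self u₀ W, ?_⟩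
      omega

/-- mu determines u -/
lemma mu_inj {u v : Fin m → F2} (h : sVal (mu u) = sVal (mu v)) : u = v := by
  have h2 := sVal_inj h
  apply ext_get
  intro j hj
  have := congrFun h2 ⟨j, by omega⟩
  have hu : mu u ⟨j, by omega⟩ = get u j := by
    show (if j < m then get u j else zu u) = get u j
    rw [if_pos hj]
  have hv : mu v ⟨j, by omega⟩ = get v j := by
    show (if j < m then get v j else zu v) = get v j
    rw [if_pos hj]
  rw [hu, hv] at this
  exact this

noncomputable def WK (m K : ℕ) : Finset (Fin m → F2) :=
  (Sset m).filter (fun u => K ≤ sVal (mu u))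

lemma inv_WK (hm : 1 ≤ m) : ∀ K, Inv hm (WK m K) := by
  classical
  have hstep : ∀ K, Inv hm (WK m (K+1)) → Inv hm (WK m K) := by
    intro K hI
    by_cases hex : ∃ u ∈ Sset m, sVal (mu u) = K
    · obtain ⟨u₀, hu₀S, hu₀K⟩ := hex
      have hWeq : WK m K = insert u₀ (WK m (K+1)) := by
        apply Finset.ext
        intro v
        rw [Finset.mem_insert]
        unfold WK
        rw [Finset.mem_filter, Finset.mem_filter]
        constructor
        · rintro ⟨hvS, hvK⟩
          rcases Nat.eq_or_lt_of_le hvK with heq | hlt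
          · left
            exact mu_inj (by omega)
          · right
            exact ⟨hvS, by omega⟩
        · rintro (rfl | ⟨hvS, hvK⟩)
          · exact ⟨hu₀S, by omega⟩
          · exact ⟨hvS, by omega⟩
      have hu₀W : u₀ ∉ WK m (K+1) := by
        unfold WK
        rw [Finset.mem_filter]
        rintro ⟨-, hc⟩
        omega
      have horder : ∀ u ∈ WK m (K+1), sVal (mu u₀) < sVal (mu u) := by
        intro u hu
        unfold WK at hu
        rw [Finset.mem_filter] at hu
        omega
      rw [hWeq]
      exact inv_step hm _ u₀ hu₀S hu₀W horder hI
    · push_neg at hex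
      have hWeq : WK m K = WK m (K+1) := by
        apply Finset.ext
        intro v
        unfold WK
        rw [Finset.mem_filter, Finset.mem_filter]
        constructor
        · rintro ⟨hvS, hvK⟩
          refine ⟨hvS, ?_⟩
          have := hex v hvS
          omega
        · rintro ⟨hvS, hvK⟩
          exact ⟨hvS, by omega⟩
      rw [hWeq]
      exact hI
  have hbase : Inv hm (WK m (2^(m+1))) := by
    have hWeq : WK m (2^(m+1)) = ∅ := by
      apply Finset.eq_empty_of_forall_notMem
      intro v
      unfold WK
      rw [Finset.mem_filter]
      rintro ⟨-, hc⟩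
      exact absurd hc (by have := sVal_lt (mu v); omega)
    rw [hWeq]
    exact inv_empty hm
  have hdown : ∀ j, Inv hm (WK m (2^(m+1) - j)) := by
    intro j
    induction j with
    | zero => rw [Nat.sub_zero]; exact hbase
    | succ j ih =>
      rcases Nat.lt_or_ge j (2^(m+1)) with h | h
      · have he : 2^(m+1) - j = (2^(m+1) - (j+1)) + 1 := by omega
        apply hstep
        rw [← he]
        exact ih
      · have he : 2^(m+1) - (j+1) = 2^(m+1) - j := by omega
        rw [he]
        exact ih
  intro K
  rcases Nat.lt_or_ge K (2^(m+1)) with h | h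
  · have he : K = 2^(m+1) - (2^(m+1) - K) := by omega
    rw [he]
    exact hdown _
  · -- K large: WK m K = ∅
    have hWeq : WK m K = ∅ := by
      apply Finset.eq_empty_of_forall_notMem
      intro v
      unfold WK
      rw [Finset.mem_filter]
      rintro ⟨-, hc⟩
      exact absurd hc (by have := sVal_lt (mu v); omega)
    rw [hWeq]
    exact inv_empty hm

lemma WK_zero : WK m 0 = Sset m := by
  unfold WK
  apply Finset.filter_true_of_mem
  intro u _
  omega

lemma inv_Sset (hm : 1 ≤ m) : Inv hm (Sset m) := by
  have := inv_WK hm 0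
  rwa [WK_zero] at this

/-- connectivity: every state reaches the zero state under tau (Sset m) -/
lemma reach_zero (hm : 1 ≤ m) (x : Fin (m+1) → F2) :
    inOrbit (tau (Sset m)) x (fun _ => (0:F2)) := by
  obtain ⟨inv1, inv2, inv3⟩ := inv_Sset hm
  have hfinj : Function.Injective (tau (Sset m)) := tau_inj hm _
  have hmain : ∀ N, ∀ x : Fin (m+1) → F2, key hm x < N →
      inOrbit (tau (Sset m)) x (fun _ => (0:F2)) := by
    intro N
    induction N with
    | zero => intro x hx; omega
    | succ N ih =>
      intro x hx
      rcases core1 hm x with h | ⟨u, huS, horb, hkey⟩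
      · exact inv1 _ _ h
      · have hxy : inOrbit (tau (Sset m)) x (yu u) := inv1 _ _ horb
        have hyx : inOrbit (tau (Sset m)) (yu u) (xu u) :=
          inOrbit_symm hfinj (inv2 u ((mem_Sset u).mpr huS))
        have hkx : key hm (xu u) < key hm x := by
          rw [hkey]
          exact lt_of_le_of_lt (key_le_sval hm (xu u)) (sval_xu_lt_mu hm u)
        have hrec := ih (xu u) (by omega)
        exact inOrbit_trans hxy (inOrbit_trans hyx hrec)
  exact hmain (key hm x + 1) x (by omega)

lemma tau_generates (hm : 1 ≤ m) : ∀ x y : Fin (m+1) → F2,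
    ∃ k : ℕ, (tau (Sset m))^[k] x = y := by
  intro x y
  have hfinj : Function.Injective (tau (Sset m)) := tau_inj hm _
  have h1 := reach_zero hm x
  have h2 := inOrbit_symm hfinj (reach_zero hm y)
  exact inOrbit_trans h1 h2

end Assembly
end Sala
/-- Sala's successor rule `ς` generates a de Bruijn sequence of order `n`. -/
theorem sala_rule_generates (n : ℕ) (hn : 3 ≤ n) :
    generatesDB (fun c : Fin n → F2 =>
      if IsNecklace (stTail c) ∨ IsCoNecklace (stTail c)
      then get c 0 + get c 1 + get c (n - 1) + 1
      else get c 0 + get c 1 + get c (n - 1)) := by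
  obtain ⟨m, rfl⟩ : ∃ m, n = m + 1 := ⟨n - 1, by omega⟩
  have hm : 1 ≤ m := by omega
  have heq : nextMap (fun c : Fin (m+1) → F2 =>
      if IsNecklace (stTail c) ∨ IsCoNecklace (stTail c)
      then get c 0 + get c 1 + get c (m + 1 - 1) + 1
      else get c 0 + get c 1 + get c (m + 1 - 1)) = Sala.tau (Sala.Sset m) := by
    funext c i
    unfold nextMap Sala.tau shiftIn
    rcases Nat.lt_or_ge ((i:ℕ)+1) (m+1) with h | h
    · rw [dif_pos h, dif_pos h]
    · rw [dif_neg (by omega), dif_neg (by omega)]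
      beta_reduce
      have hfb : Sala.fb c = get c 0 + get c 1 + get c (m + 1 - 1) := rfl
      by_cases hS : IsNecklace (stTail c) ∨ IsCoNecklace (stTail c)
      · rw [if_pos hS, if_pos ((Sala.mem_Sset (m := m) (stTail c)).mpr hS), hfb]
      · rw [if_neg hS, if_neg (fun hc => hS ((Sala.mem_Sset (m := m) (stTail c)).mp hc)),
            hfb, add_zero]
  intro x y
  rw [heq]
  exact Sala.tau_generates hm x y
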